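/- The farthest-first traversal algorithm for k-center gives a 2-approximation: if T is the clustering returned by farthest-first traversal on a finite metric space and T° is the optimal k-center clustering, then cost(T°) ≤ cost(T) ≤ 2·cost(T°), where cost of a clustering is the maximum distance from a point to its assigned center. -/
import Mathlib


/-- The k-center cost of a family of centers `w` on a finite metric space:
the maximum over points of the distance to the nearest center. -/
noncomputable def kCenterCost {X : Type*} [MetricSpace X] [Fintype X] {k : ℕ}
    (w : Fin k → X) : ℝ :=
  ⨆ x : X, ⨅ j : Fin k, dist x (w j)

/-- Farthest-first traversal gives a 2-approximation for k-center: if `z` is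
produced by farthest-first traversal (each new center is a point farthest from
the previously chosen centers) and `zo` is an optimal set of `k` centers, then
`cost zo ≤ cost z ≤ 2 * cost zo`. -/
theorem farthest_first_two_approx {X : Type*} [MetricSpace X] [Fintype X] [Nonempty X]
    (k : ℕ) (hk : 1 ≤ k) (z zo : Fin k → X)
    (hff : ∀ i : Fin k, 0 < i.val → ∀ x : X,
      (⨅ j : {j : Fin k // j < i}, dist x (z j.1)) ≤
        ⨅ j : {j : Fin k // j < i}, dist (z i) (z j.1))
    (hopt : ∀ w : Fin k → X, kCenterCost zo ≤ kCenterCost w) :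
    kCenterCost zo ≤ kCenterCost z ∧ kCenterCost z ≤ 2 * kCenterCost zo := by
  have hk' : 0 < k := hk
  haveI : Nonempty (Fin k) := ⟨⟨0, hk'⟩⟩
  have hbdd : ∀ (w : Fin k → X) (x : X), BddBelow (Set.range fun j => dist x (w j)) :=
    fun w x => (Set.finite_range _).bddBelow
  have hcost_bddAbove : ∀ w : Fin k → X, BddAbove (Set.range fun x : X => ⨅ j, dist x (w j)) :=
    fun w => (Set.finite_range _).bddAbove
  have hinf_le_cost : ∀ (w : Fin k → X) (x : X), (⨅ j, dist x (w j)) ≤ kCenterCost w :=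
    fun w x => le_ciSup (hcost_bddAbove w) x
  have hr0 : (0 : ℝ) ≤ kCenterCost zo :=
    le_trans (le_ciInf fun j => dist_nonneg) (hinf_le_cost zo (Classical.arbitrary X))
  refine ⟨hopt z, ?_⟩
  obtain ⟨x₀, hx₀⟩ := exists_eq_ciSup_of_finite (f := fun x : X => ⨅ j, dist x (z j))
  have hx₀' : kCenterCost z = ⨅ j, dist x₀ (z j) := hx₀.symm
  set p : Fin (k+1) → X := fun i => if h : i.val < k then z ⟨i.val, h⟩ else x₀ with hp
  -- distinct points have pairwise distance ≥ cost z
  have key : ∀ i₁ i₂ : Fin (k+1), i₁ < i₂ → kCenterCost z ≤ dist (p i₂) (p i₁) := by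
    intro i₁ i₂ h12
    have h12' : i₁.val < i₂.val := h12
    have h2le : i₂.val < k + 1 := i₂.isLt
    have h1k : i₁.val < k := by omega
    have hp1 : p i₁ = z ⟨i₁.val, h1k⟩ := by simp [hp, h1k]
    by_cases h2k : i₂.val < k
    · -- both are centers: use farthest-first property at i₂
      have hp2 : p i₂ = z ⟨i₂.val, h2k⟩ := by simp [hp, h2k]
      set i : Fin k := ⟨i₂.val, h2k⟩ with hi
      have hipos : 0 < i.val := lt_of_le_of_lt (Nat.zero_le _) h12
      haveI : Nonempty {j : Fin k // j < i} := ⟨⟨⟨0, hk'⟩, by simpa [Fin.lt_def] using hipos⟩⟩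
      have hsub : (⨅ j : Fin k, dist x₀ (z j)) ≤ ⨅ j : {j : Fin k // j < i}, dist x₀ (z j.1) :=
        le_ciInf fun j => ciInf_le (hbdd z x₀) j.1
      have hmem : (⨅ j : {j : Fin k // j < i}, dist (z i) (z j.1)) ≤ dist (z i) (z ⟨i₁.val, h1k⟩) := by
        have : BddBelow (Set.range fun j : {j : Fin k // j < i} => dist (z i) (z j.1)) :=
          (Set.finite_range _).bddBelow
        exact ciInf_le this ⟨⟨i₁.val, h1k⟩, by rw [hi]; exact Fin.mk_lt_mk.mpr h12'⟩
      calc kCenterCost z = ⨅ j, dist x₀ (z j) := hx₀'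
        _ ≤ ⨅ j : {j : Fin k // j < i}, dist x₀ (z j.1) := hsub
        _ ≤ ⨅ j : {j : Fin k // j < i}, dist (z i) (z j.1) := hff i hipos x₀
        _ ≤ dist (z i) (z ⟨i₁.val, h1k⟩) := hmem
        _ = dist (p i₂) (p i₁) := by rw [hp1, hp2]
    · -- i₂ is the extra point x₀
      have hp2 : p i₂ = x₀ := dif_neg h2k
      calc kCenterCost z = ⨅ j, dist x₀ (z j) := hx₀'
        _ ≤ dist x₀ (z ⟨i₁.val, h1k⟩) := ciInf_le (hbdd z x₀) _
        _ = dist (p i₂) (p i₁) := by rw [hp1, hp2]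
  -- nearest optimal center of each of the k+1 points
  have near : ∀ i : Fin (k+1), ∃ j : Fin k, dist (p i) (zo j) ≤ kCenterCost zo := by
    intro i
    obtain ⟨j, hj⟩ := exists_eq_ciInf_of_finite (f := fun j => dist (p i) (zo j))
    exact ⟨j, hj ▸ hinf_le_cost zo (p i)⟩
  choose f hf using near
  obtain ⟨a, b, hab, hfab⟩ := Fintype.exists_ne_map_eq_of_card_lt f (by simp)
  have main : ∀ a b : Fin (k+1), a < b → f a = f b → kCenterCost z ≤ 2 * kCenterCost zo := by
    intro a b hlt hfe
    calc kCenterCost z ≤ dist (p b) (p a) := key a b hlt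
      _ ≤ dist (p b) (zo (f b)) + dist (zo (f b)) (p a) := dist_triangle _ _ _
      _ = dist (p b) (zo (f b)) + dist (p a) (zo (f a)) := by rw [hfe, dist_comm (zo (f b)) (p a)]
      _ ≤ kCenterCost zo + kCenterCost zo := add_le_add (hf b) (hf a)
      _ = 2 * kCenterCost zo := by ring
  rcases lt_or_gt_of_ne hab with h | h
  · exact main a b h hfab
  · exact main b a h hfab.symm
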